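/- In the setting of the previous statement, for any projection P_E on H_E, the probability Prob_s(α) = ⟨Ψ_t(s)|(1_S ⊗ P_E)|Ψ_t(s)⟩ with Ψ_t(s) = e^{-iHt}(e^{iGs}ψ ⊗ φ) is independent of s ∈ ℝ. -/

import Mathlib

open Kronecker Matrix

section Aux

variable {m n : Type*} [Fintype m] [DecidableEq m] [Fintype n] [DecidableEq n]

/-- `A ↦ A ⊗ₖ 1` as a ring hom. -/
private def kronRight (n : Type*) [Fintype n] [DecidableEq n] :
    Matrix m m ℂ →+* Matrix (m × n) (m × n) ℂ where
  toFun A := A ⊗ₖ (1 : Matrix n n ℂ)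
  map_one' := Matrix.one_kronecker_one
  map_mul' A B := by rw [← Matrix.mul_kronecker_mul, one_mul]
  map_zero' := Matrix.zero_kronecker _
  map_add' A B := Matrix.add_kronecker A B _

private lemma kronRight_continuous : Continuous (kronRight (m := m) n) := by
  apply continuous_matrix
  rintro ⟨i1, i2⟩ ⟨j1, j2⟩
  simp only [kronRight, RingHom.coe_mk, MonoidHom.coe_mk, OneHom.coe_mk,
    Matrix.kroneckerMap_apply]
  exact (continuous_id.matrix_elem i1 j1).mul continuous_const

private lemma exp_kronRight (A : Matrix m m ℂ) :
    NormedSpace.exp A ⊗ₖ (1 : Matrix n n ℂ) =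
      NormedSpace.exp (A ⊗ₖ (1 : Matrix n n ℂ)) := by
  letI : SeminormedRing (Matrix m m ℂ) := Matrix.linftyOpSemiNormedRing
  letI : NormedRing (Matrix m m ℂ) := Matrix.linftyOpNormedRing
  letI : NormedAlgebra ℂ (Matrix m m ℂ) := Matrix.linftyOpNormedAlgebra
  letI : SeminormedRing (Matrix (m × n) (m × n) ℂ) := Matrix.linftyOpSemiNormedRing
  letI : NormedRing (Matrix (m × n) (m × n) ℂ) := Matrix.linftyOpNormedRing
  letI : NormedAlgebra ℂ (Matrix (m × n) (m × n) ℂ) := Matrix.linftyOpNormedAlgebra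
  letI : NormedAlgebra ℚ (Matrix m m ℂ) := Matrix.linftyOpNormedAlgebra
  letI : NormedAlgebra ℚ (Matrix (m × n) (m × n) ℂ) := Matrix.linftyOpNormedAlgebra
  exact NormedSpace.map_exp (kronRight n) kronRight_continuous A

private lemma kron_mulVec (B : Matrix m m ℂ) (ψ : m → ℂ) (φ : n → ℂ) :
    (fun p : m × n => (B.mulVec ψ) p.1 * φ p.2) =
      (B ⊗ₖ (1 : Matrix n n ℂ)).mulVec (fun p => ψ p.1 * φ p.2) := by
  funext p
  simp only [Matrix.mulVec, dotProduct, Fintype.sum_prod_type,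
    Matrix.kroneckerMap_apply, Matrix.one_apply, Finset.sum_mul, mul_ite, ite_mul,
    mul_one, mul_zero, zero_mul, one_mul, Finset.sum_ite_eq, Finset.mem_univ, if_true]
  exact Finset.sum_congr rfl fun i _ => by ring

private lemma inner_form {k : Type*} [Fintype k] (M N : Matrix k k ℂ) (χ : k → ℂ) :
    ∑ p, (starRingEnd ℂ) ((M.mulVec χ) p) * ((N.mulVec (M.mulVec χ)) p) =
      dotProduct (star χ) ((Mᴴ * (N * M)).mulVec χ) := by
  have h1 : ∑ p, (starRingEnd ℂ) ((M.mulVec χ) p) * ((N.mulVec (M.mulVec χ)) p)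
      = dotProduct (star (M.mulVec χ)) (N.mulVec (M.mulVec χ)) := by
    simp only [dotProduct, Pi.star_apply, starRingEnd_apply]
  rw [h1, Matrix.star_mulVec, ← Matrix.dotProduct_mulVec,
    Matrix.mulVec_mulVec, Matrix.mulVec_mulVec, mul_assoc]

private lemma conjTranspose_kron (A : Matrix m m ℂ) (B : Matrix n n ℂ) :
    (A ⊗ₖ B)ᴴ = Aᴴ ⊗ₖ Bᴴ := by
  ext p q
  simp [Matrix.conjTranspose_apply, Matrix.kroneckerMap_apply, star_mul', mul_comm]

end Aux

/-- In the setting of Statement 13 (`Htot = HS ⊗ 1 + 1 ⊗ HE + Hint`,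
`[G, HS] = 0`, `[G ⊗ 1, Hint] = 0`, `ψ`, `φ` unit vectors), for any orthogonal
projection `PE` on `H_E`, the probability
`Prob_s(α) = ⟨Ψ_t(s)|(1 ⊗ PE)|Ψ_t(s)⟩` with `Ψ_t(s) = e^{-iHt}(e^{iGs}ψ ⊗ φ)`
is independent of `s ∈ ℝ`. -/
theorem stmt14
    {m n : Type*} [Fintype m] [DecidableEq m] [Fintype n] [DecidableEq n]
    (HS G : Matrix m m ℂ) (HE : Matrix n n ℂ)
    (Hint : Matrix (m × n) (m × n) ℂ)
    (hHSsa : HS.IsHermitian) (hHEsa : HE.IsHermitian) (hHintsa : Hint.IsHermitian)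
    (hGsa : G.IsHermitian)
    (hGHS : G * HS = HS * G)
    (hGHint : (G ⊗ₖ (1 : Matrix n n ℂ)) * Hint = Hint * (G ⊗ₖ (1 : Matrix n n ℂ)))
    (Htot : Matrix (m × n) (m × n) ℂ)
    (hHtot : Htot = HS ⊗ₖ (1 : Matrix n n ℂ) + (1 : Matrix m m ℂ) ⊗ₖ HE + Hint)
    (PE : Matrix n n ℂ) (hPEproj : PE * PE = PE) (hPEsa : PE.IsHermitian)
    (ψ : m → ℂ) (hψ : ∑ i, ‖ψ i‖ ^ 2 = 1)
    (φ : n → ℂ) (hφ : ∑ j, ‖φ j‖ ^ 2 = 1)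
    (t : ℝ) :
    ∀ s s' : ℝ,
      (let Ψ : ℝ → (m × n → ℂ) := fun σ =>
        (NormedSpace.exp ((-(Complex.I * (t : ℂ))) • Htot)).mulVec
          (fun p => ((NormedSpace.exp ((Complex.I * (σ : ℂ)) • G)).mulVec ψ) p.1 * φ p.2);
      ∑ p, (starRingEnd ℂ) (Ψ s p) *
          (((1 : Matrix m m ℂ) ⊗ₖ PE).mulVec (Ψ s)) p
        = ∑ p, (starRingEnd ℂ) (Ψ s' p) *
          (((1 : Matrix m m ℂ) ⊗ₖ PE).mulVec (Ψ s')) p) := by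
  letI : SeminormedRing (Matrix (m × n) (m × n) ℂ) := Matrix.linftyOpSemiNormedRing
  letI : NormedRing (Matrix (m × n) (m × n) ℂ) := Matrix.linftyOpNormedRing
  letI : NormedAlgebra ℂ (Matrix (m × n) (m × n) ℂ) := Matrix.linftyOpNormedAlgebra
  intro s s'
  set K : Matrix (m × n) (m × n) ℂ := G ⊗ₖ (1 : Matrix n n ℂ) with hK
  set N : Matrix (m × n) (m × n) ℂ := (1 : Matrix m m ℂ) ⊗ₖ PE with hN
  set E : Matrix (m × n) (m × n) ℂ :=
    NormedSpace.exp ((-(Complex.I * (t : ℂ))) • Htot) with hE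
  set χ : m × n → ℂ := fun p => ψ p.1 * φ p.2 with hχ
  -- commutation facts
  have hKHtot : Commute K Htot := by
    rw [hHtot]
    refine (Commute.add_right (Commute.add_right ?_ ?_) ?_)
    · show K * _ = _ * K
      rw [hK, ← Matrix.mul_kronecker_mul, ← Matrix.mul_kronecker_mul, hGHS, one_mul]
    · show K * _ = _ * K
      rw [hK, ← Matrix.mul_kronecker_mul, ← Matrix.mul_kronecker_mul,
        one_mul, mul_one, one_mul, mul_one]
    · exact hGHint
  have hKN : Commute K N := by
    show K * N = N * K
    rw [hK, hN, ← Matrix.mul_kronecker_mul, ← Matrix.mul_kronecker_mul,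
      one_mul, mul_one, one_mul, mul_one]
  have hKsa : Kᴴ = K := by
    rw [hK, conjTranspose_kron, hGsa.eq, Matrix.conjTranspose_one]
  have hHtotsa : Htotᴴ = Htot := by
    rw [hHtot, Matrix.conjTranspose_add, Matrix.conjTranspose_add,
      conjTranspose_kron, conjTranspose_kron, hHSsa.eq, hHEsa.eq, hHintsa.eq,
      Matrix.conjTranspose_one, Matrix.conjTranspose_one]
  -- exponential commutation helpers
  have hcomm1 : ∀ a b : ℂ,
      Commute (NormedSpace.exp (a • K)) (NormedSpace.exp (b • Htot)) :=
    fun a b => Commute.exp ((hKHtot.smul_left a).smul_right b)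
  have hcomm2 : ∀ a : ℂ, Commute (NormedSpace.exp (a • K)) N :=
    fun a => Commute.exp_left (hKN.smul_left a)
  have key : ∀ σ : ℝ,
      ∑ p, (starRingEnd ℂ)
          ((E.mulVec (fun p => ((NormedSpace.exp ((Complex.I * (σ : ℂ)) • G)).mulVec ψ)
              p.1 * φ p.2)) p) *
        ((N.mulVec (E.mulVec (fun p =>
            ((NormedSpace.exp ((Complex.I * (σ : ℂ)) • G)).mulVec ψ) p.1 * φ p.2))) p)
      = dotProduct (star χ) ((Eᴴ * (N * E)).mulVec χ) := by
    intro σ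
    set U : Matrix (m × n) (m × n) ℂ :=
      NormedSpace.exp ((Complex.I * (σ : ℂ)) • K) with hU
    set V : Matrix (m × n) (m × n) ℂ :=
      NormedSpace.exp ((-(Complex.I * (σ : ℂ))) • K) with hV
    have hvec : (fun p : m × n =>
        ((NormedSpace.exp ((Complex.I * (σ : ℂ)) • G)).mulVec ψ) p.1 * φ p.2)
        = U.mulVec χ := by
      rw [kron_mulVec, exp_kronRight, Matrix.smul_kronecker, hχ, hU, hK]
    have hEU : E.mulVec (U.mulVec χ) = (E * U).mulVec χ := Matrix.mulVec_mulVec _ _ _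
    rw [hvec, hEU, inner_form]
    congr 1
    refine congrArg (fun M : Matrix (m × n) (m × n) ℂ => M.mulVec χ) ?_
    -- matrix identity : (E*U)ᴴ * (N * (E*U)) = Eᴴ * (N * E)
    have hUc : Uᴴ = V := by
      rw [hU, hV, ← Matrix.exp_conjTranspose, Matrix.conjTranspose_smul, hKsa]
      congr 1
      simp [star_mul', Complex.conj_I, Complex.conj_ofReal]
    have hVU : V * U = 1 := by
      rw [hU, hV, ← Matrix.exp_add_of_commute _ _
        (((Commute.refl K).smul_left _).smul_right _)]
      rw [← add_smul, neg_add_cancel, zero_smul, NormedSpace.exp_zero]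
    have hEc : Eᴴ = NormedSpace.exp ((Complex.I * (t : ℂ)) • Htot) := by
      rw [hE, ← Matrix.exp_conjTranspose, Matrix.conjTranspose_smul, hHtotsa]
      congr 1
      simp [star_mul', Complex.conj_I, Complex.conj_ofReal]
    have cVE : Commute V E := hcomm1 _ _
    have cVEH : Commute V Eᴴ := by rw [hEc]; exact hcomm1 _ _
    have cVN : Commute V N := hcomm2 _
    rw [Matrix.conjTranspose_mul, hUc]
    calc V * Eᴴ * (N * (E * U))
        = Eᴴ * V * (N * (E * U)) := by rw [cVEH.eq]
      _ = Eᴴ * (N * E) := by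
          rw [mul_assoc, ← mul_assoc V N, cVN.eq, mul_assoc N V, ← mul_assoc V E,
            cVE.eq, mul_assoc E V, hVU, mul_one]
  exact (key s).trans (key s').symm
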